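/- Let X be a coherent configuration of degree n, maximal valency k, and indistinguishing number c, and fix a point μ. For a point α, let Λ(α) be the set of points β such that c_{x r y} ≠ 1 where x = r(μ,α), y = r(μ,β), r = r(α,β) (i.e. the intersection number c_{xr}^y ≥ 2). Then |Λ(α)| ≤ (1/2)·c·k·(k-1). -/

import Mathlib

open Finset

structure CoherentConfiguration (Ω : Type*) [Fintype Ω] [DecidableEq Ω] where
  S : Set (Finset (Ω × Ω))
  nonempty_mem : ∀ s ∈ S, s.Nonempty
  cover : ∀ p : Ω × Ω, ∃ s ∈ S, p ∈ s
  pairwise_disjoint : ∀ s ∈ S, ∀ t ∈ S, s ≠ t → ∀ p : Ω × Ω, p ∈ s → p ∉ t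
  diag_union : ∀ s ∈ S, ∀ p ∈ s, p.1 = p.2 → ∀ q ∈ s, q.1 = q.2
  conv_mem : ∀ s ∈ S, s.image (fun p => (p.2, p.1)) ∈ S
  inter_const : ∀ r ∈ S, ∀ s ∈ S, ∀ t ∈ S, ∀ p ∈ t, ∀ q ∈ t,
    (Finset.univ.filter fun γ => (p.1, γ) ∈ r ∧ (γ, p.2) ∈ s).card =
    (Finset.univ.filter fun γ => (q.1, γ) ∈ r ∧ (γ, q.2) ∈ s).card

namespace CoherentConfiguration

variable {Ω : Type*} [Fintype Ω] [DecidableEq Ω]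
variable {Ω' : Type*} [Fintype Ω'] [DecidableEq Ω']

/-- The converse relation `r*`. -/
def conv (r : Finset (Ω × Ω)) : Finset (Ω × Ω) := r.image fun p => (p.2, p.1)

/-- The intersection number `c_{rs}^t`, computed at a chosen pair of `t`. -/
noncomputable def interNum (r s t : Finset (Ω × Ω)) : ℕ :=
  if h : t.Nonempty then
    (Finset.univ.filter fun γ => (h.choose.1, γ) ∈ r ∧ (γ, h.choose.2) ∈ s).card
  else 0

/-- The valency `n_s`, computed at a chosen point in the domain of `s`. -/
noncomputable def valency (s : Finset (Ω × Ω)) : ℕ :=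
  if h : s.Nonempty then (Finset.univ.filter fun β : Ω => (h.choose.1, β) ∈ s).card
  else 0

/-- The complex product `rs`: the set of basis relations `t` with `c_{rs}^t ≠ 0`. -/
def cprod (C : CoherentConfiguration Ω) (r s : Finset (Ω × Ω)) : Set (Finset (Ω × Ω)) :=
  {t | t ∈ C.S ∧ interNum r s t ≠ 0}

/-- The maximal valency of a coherent configuration. -/
noncomputable def maxValency (C : CoherentConfiguration Ω) : ℕ :=
  sSup {n | ∃ s ∈ C.S, n = valency s}

/-- The set `c(α,β) = {γ : r(γ,α) = r(γ,β)}`. -/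
def indisSet (C : CoherentConfiguration Ω) (α β : Ω) : Set Ω :=
  {γ | ∀ s ∈ C.S, ((γ, α) ∈ s ↔ (γ, β) ∈ s)}

/-- The indistinguishing number of a coherent configuration. -/
noncomputable def indisNum (C : CoherentConfiguration Ω) : ℕ :=
  sSup {n | ∃ α β : Ω, α ≠ β ∧ n = (C.indisSet α β).ncard}

/-- The (a) basis relation containing the pair `(α,β)`. -/
noncomputable def rel (C : CoherentConfiguration Ω) (α β : Ω) : Finset (Ω × Ω) :=
  (C.cover (α, β)).choose

/-- `D` is a fission of `C`: every basis relation of `C` is a union of basis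
relations of `D`. -/
def IsFission (C D : CoherentConfiguration Ω) : Prop :=
  ∀ s ∈ C.S, ∃ T ⊆ D.S, (s : Set (Ω × Ω)) = ⋃ t ∈ T, (t : Set (Ω × Ω))

/-- `φ` is an algebraic isomorphism from `C` onto `C'`. -/
def IsAlgIso (C : CoherentConfiguration Ω) (C' : CoherentConfiguration Ω')
    (φ : Finset (Ω × Ω) → Finset (Ω' × Ω')) : Prop :=
  Set.BijOn φ C.S C'.S ∧
  ∀ r ∈ C.S, ∀ s ∈ C.S, ∀ t ∈ C.S, interNum r s t = interNum (φ r) (φ s) (φ t)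

end CoherentConfiguration

open CoherentConfiguration


section Helpers

variable {Ω : Type*} [Fintype Ω] [DecidableEq Ω]

lemma rel_mem_S (C : CoherentConfiguration Ω) (α β : Ω) : C.rel α β ∈ C.S :=
  (C.cover (α, β)).choose_spec.1

lemma mem_rel (C : CoherentConfiguration Ω) (α β : Ω) : (α, β) ∈ C.rel α β :=
  (C.cover (α, β)).choose_spec.2

lemma rel_eq_of_mem (C : CoherentConfiguration Ω) {s t : Finset (Ω × Ω)}
    (hs : s ∈ C.S) (ht : t ∈ C.S) {p : Ω × Ω} (hps : p ∈ s) (hpt : p ∈ t) : s = t := by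
  by_contra h
  exact C.pairwise_disjoint s hs t ht h p hps hpt

lemma count_const (C : CoherentConfiguration Ω) {x : Finset (Ω × Ω)} (hx : x ∈ C.S)
    {μ δ : Ω} (h1 : ∃ a, (μ, a) ∈ x) (h2 : ∃ e, (δ, e) ∈ x) :
    (Finset.univ.filter fun β : Ω => (μ, β) ∈ x).card =
    (Finset.univ.filter fun β : Ω => (δ, β) ∈ x).card := by
  classical
  obtain ⟨a, h1⟩ := h1
  obtain ⟨e, h2⟩ := h2
  set t := C.rel μ μ with htdef
  have ht : t ∈ C.S := rel_mem_S C μ μ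
  have hμμ : (μ, μ) ∈ t := mem_rel C μ μ
  have hdiag : ∀ p ∈ t, p.1 = p.2 := fun p hp => C.diag_union t ht (μ, μ) hμμ rfl p hp
  have key := C.inter_const t ht x hx x hx (μ, a) h1 (δ, e) h2
  have l1 : (Finset.univ.filter fun γ : Ω => (μ, γ) ∈ t ∧ (γ, a) ∈ x) = {μ} := by
    ext γ
    simp only [mem_filter, mem_univ, true_and, mem_singleton]
    constructor
    · rintro ⟨hγ, -⟩
      exact (hdiag (μ, γ) hγ).symm
    · rintro rfl
      exact ⟨hμμ, h1⟩
  have hpos : 0 < (Finset.univ.filter fun γ : Ω => (δ, γ) ∈ t ∧ (γ, e) ∈ x).card := by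
    rw [← key, l1]; simp
  obtain ⟨γ, hγ⟩ := Finset.card_pos.mp hpos
  rw [mem_filter] at hγ
  have hδδ : (δ, δ) ∈ t := by
    have := hdiag (δ, γ) hγ.2.1
    simp only at this
    subst this
    exact hγ.2.1
  have key2 := C.inter_const x hx (x.image fun p => (p.2, p.1)) (C.conv_mem x hx)
    t ht (μ, μ) hμμ (δ, δ) hδδ
  have hconv : ∀ γ ξ : Ω, ((γ, ξ) ∈ x.image fun p => (p.2, p.1)) ↔ (ξ, γ) ∈ x := by
    intro γ ξ
    constructor
    · rintro h
      rw [Finset.mem_image] at h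
      obtain ⟨⟨u, v⟩, huv, heq⟩ := h
      simp only [Prod.mk.injEq] at heq
      obtain ⟨rfl, rfl⟩ := heq
      exact huv
    · intro h
      rw [Finset.mem_image]
      exact ⟨(ξ, γ), h, rfl⟩
  have e1 : (Finset.univ.filter fun γ : Ω => (μ, γ) ∈ x ∧ ((γ, μ) ∈ x.image fun p => (p.2, p.1)))
      = Finset.univ.filter fun γ : Ω => (μ, γ) ∈ x := by
    apply Finset.filter_congr
    intro γ _
    simp [hconv]
  have e2 : (Finset.univ.filter fun γ : Ω => (δ, γ) ∈ x ∧ ((γ, δ) ∈ x.image fun p => (p.2, p.1)))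
      = Finset.univ.filter fun γ : Ω => (δ, γ) ∈ x := by
    apply Finset.filter_congr
    intro γ _
    simp [hconv]
  rw [e1, e2] at key2
  exact key2

lemma valency_eq (C : CoherentConfiguration Ω) {x : Finset (Ω × Ω)} (hx : x ∈ C.S)
    {μ a : Ω} (h : (μ, a) ∈ x) :
    valency x = (Finset.univ.filter fun β : Ω => (μ, β) ∈ x).card := by
  have hne : x.Nonempty := ⟨_, h⟩
  rw [valency, dif_pos hne]
  exact count_const C hx ⟨_, hne.choose_spec⟩ ⟨a, h⟩

lemma valency_le_max (C : CoherentConfiguration Ω) {x : Finset (Ω × Ω)} (hx : x ∈ C.S) :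
    valency x ≤ C.maxValency := by
  apply le_csSup
  · refine ⟨Fintype.card Ω, ?_⟩
    rintro n ⟨s, hs, rfl⟩
    unfold valency
    split
    · calc _ ≤ (Finset.univ : Finset Ω).card := Finset.card_filter_le _ _
        _ = Fintype.card Ω := Finset.card_univ
    · exact Nat.zero_le _
  · exact ⟨x, hx, rfl⟩

lemma indis_le (C : CoherentConfiguration Ω) {a b : Ω} (h : a ≠ b) :
    (C.indisSet a b).ncard ≤ C.indisNum := by
  apply le_csSup
  · refine ⟨Fintype.card Ω, ?_⟩
    rintro n ⟨a', b', hab, rfl⟩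
    calc (C.indisSet a' b').ncard ≤ (Set.univ : Set Ω).ncard :=
          Set.ncard_le_ncard (Set.subset_univ _) Set.finite_univ
      _ = Fintype.card Ω := by rw [Set.ncard_univ, Nat.card_eq_fintype_card]
  · exact ⟨a, b, h, rfl⟩

omit [DecidableEq Ω] in
lemma ncard_setOf {P : Ω → Prop} [DecidablePred P] :
    {x | P x}.ncard = (Finset.univ.filter P).card := by
  rw [← Set.ncard_coe_finset]
  congr 1
  ext γ
  simp

end Helpers

theorem bad_set_bound {Ω : Type*} [Fintype Ω] [DecidableEq Ω]
    (C : CoherentConfiguration Ω) (μ α : Ω) :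
    2 * {β : Ω | interNum (C.rel μ α) (C.rel α β) (C.rel μ β) ≠ 1}.ncard ≤
      C.indisNum * C.maxValency * (C.maxValency - 1) := by
  classical
  set x := C.rel μ α with hxdef
  have hxS : x ∈ C.S := rel_mem_S C μ α
  have hμα : (μ, α) ∈ x := mem_rel C μ α
  set M : Finset Ω := Finset.univ.filter (fun δ => (μ, δ) ∈ x) with hMdef
  set L : Finset Ω :=
    Finset.univ.filter (fun β => interNum (C.rel μ α) (C.rel α β) (C.rel μ β) ≠ 1) with hLdef
  have hL : {β : Ω | interNum (C.rel μ α) (C.rel α β) (C.rel μ β) ≠ 1}.ncard = L.card :=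
    ncard_setOf
  rw [hL]
  -- key step: for each β in L, produce a second point α' of μx with (α',β) ∈ r(α,β)
  have key : ∀ β : Ω, ∃ α' : Ω, β ∈ L →
      α' ≠ α ∧ (μ, α') ∈ x ∧ (α', β) ∈ C.rel α β := by
    intro β
    by_cases hβ : β ∈ L
    · have hyS : C.rel μ β ∈ C.S := rel_mem_S C μ β
      have hy : (μ, β) ∈ C.rel μ β := mem_rel C μ β
      have hne : (C.rel μ β).Nonempty := ⟨_, hy⟩
      have hrS : C.rel α β ∈ C.S := rel_mem_S C α β
      have hcount : interNum x (C.rel α β) (C.rel μ β) =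
          (Finset.univ.filter fun γ : Ω => (μ, γ) ∈ x ∧ (γ, β) ∈ C.rel α β).card := by
        rw [interNum, dif_pos hne]
        exact C.inter_const x hxS (C.rel α β) hrS (C.rel μ β) hyS
          hne.choose hne.choose_spec (μ, β) hy
      have hαmem : α ∈ Finset.univ.filter fun γ : Ω => (μ, γ) ∈ x ∧ (γ, β) ∈ C.rel α β := by
        simp only [mem_filter, mem_univ, true_and]
        exact ⟨hμα, mem_rel C α β⟩
      have hne1 : interNum x (C.rel α β) (C.rel μ β) ≠ 1 := by
        simpa [hLdef, Finset.mem_filter] using hβ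
      have hcard2 : 1 < (Finset.univ.filter fun γ : Ω => (μ, γ) ∈ x ∧ (γ, β) ∈ C.rel α β).card := by
        have hpos : 0 < (Finset.univ.filter fun γ : Ω =>
            (μ, γ) ∈ x ∧ (γ, β) ∈ C.rel α β).card := Finset.card_pos.mpr ⟨α, hαmem⟩
        have hne1' : (Finset.univ.filter fun γ : Ω =>
            (μ, γ) ∈ x ∧ (γ, β) ∈ C.rel α β).card ≠ 1 := fun h => hne1 (hcount.trans h)
        omega
      obtain ⟨α', hα'mem, hα'ne⟩ := Finset.exists_mem_ne hcard2 α
      rw [Finset.mem_filter] at hα'mem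
      exact ⟨α', fun _ => ⟨hα'ne, hα'mem.2.1, hα'mem.2.2⟩⟩
    · exact ⟨α, fun h => absurd h hβ⟩
  choose f hf using key
  -- the indistinguishing property
  have hind : ∀ β ∈ L, ∀ s ∈ C.S, ((β, α) ∈ s ↔ (β, f β) ∈ s) := by
    intro β hβ s hs
    obtain ⟨hne, hmem, hrel⟩ := hf β hβ
    have h1 : (β, α) ∈ (C.rel α β).image (fun p => (p.2, p.1)) :=
      Finset.mem_image.mpr ⟨(α, β), mem_rel C α β, rfl⟩
    have h2 : (β, f β) ∈ (C.rel α β).image (fun p => (p.2, p.1)) :=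
      Finset.mem_image.mpr ⟨(f β, β), hrel, rfl⟩
    have hcS := C.conv_mem (C.rel α β) (rel_mem_S C α β)
    constructor
    · intro h
      have := rel_eq_of_mem C hs hcS h h1
      rw [this]; exact h2
    · intro h
      have := rel_eq_of_mem C hs hcS h h2
      rw [this]; exact h1
  -- target set of triples
  set T : Finset (Ω × Ω × Ω) :=
    (M ×ˢ M ×ˢ (Finset.univ : Finset Ω)).filter
      (fun t => t.1 ≠ t.2.1 ∧ ∀ s ∈ C.S, ((t.2.2, t.1) ∈ s ↔ (t.2.2, t.2.1) ∈ s)) with hTdef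
  -- Step A : 2 * L.card ≤ T.card
  have stepA : 2 * L.card ≤ T.card := by
    have hinj : (L ×ˢ (Finset.univ : Finset Bool)).card ≤ T.card := by
      apply Finset.card_le_card_of_injOn
        (fun q => if q.2 then (α, f q.1, q.1) else (f q.1, α, q.1))
      · rintro ⟨β, b⟩ hq
        rw [Finset.mem_coe, Finset.mem_product] at hq
        have hβ : β ∈ L := hq.1
        obtain ⟨hne, hmem, hrel⟩ := hf β hβ
        have hαM : α ∈ M := by simp [hMdef, hμα]
        have hfM : f β ∈ M := by simp [hMdef, hmem]
        cases b with
        | true =>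
          simp only [if_true]
          rw [hTdef, Finset.mem_coe, Finset.mem_filter]
          refine ⟨by simp [Finset.mem_product, hαM, hfM], fun h => hne h.symm, ?_⟩
          exact fun s hs => hind β hβ s hs
        | false =>
          simp only [if_false]
          rw [hTdef, Finset.mem_coe, Finset.mem_filter]
          refine ⟨by simp [Finset.mem_product, hαM, hfM], hne, ?_⟩
          exact fun s hs => (hind β hβ s hs).symm
      · rintro ⟨β, b⟩ hq ⟨β', b'⟩ hq' heq
        simp only [Finset.coe_product, Set.mem_prod, Finset.mem_coe] at hq hq'
        have hβ : β ∈ L := hq.1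
        have hβ' : β' ∈ L := hq'.1
        have hne := (hf β hβ).1
        have hne' := (hf β' hβ').1
        cases b <;> cases b' <;>
          simp only [Bool.false_eq_true, if_true, if_false, ite_true, ite_false,
            Prod.mk.injEq] at heq
        · exact Prod.ext heq.2.2 rfl
        · exact absurd heq.1 hne
        · exact absurd heq.1.symm hne'
        · exact Prod.ext heq.2.2 rfl
    calc 2 * L.card = (L ×ˢ (Finset.univ : Finset Bool)).card := by
          rw [Finset.card_product, Finset.card_univ, Fintype.card_bool, Nat.mul_comm]
      _ ≤ T.card := hinj
  -- Step B : T.card ≤ indisNum * (M.card * (M.card - 1))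
  set P : Finset (Ω × Ω) := (M ×ˢ M).filter (fun p => p.1 ≠ p.2) with hPdef
  have stepB : T.card ≤ C.indisNum * (M.card * (M.card - 1)) := by
    have hmap : ∀ t ∈ T, (t.1, t.2.1) ∈ P := by
      intro t ht
      rw [hTdef, Finset.mem_filter, Finset.mem_product, Finset.mem_product] at ht
      rw [hPdef, Finset.mem_filter, Finset.mem_product]
      exact ⟨⟨ht.1.1, ht.1.2.1⟩, ht.2.1⟩
    rw [Finset.card_eq_sum_card_fiberwise hmap]
    have hfib : ∀ p ∈ P, (T.filter fun t => (t.1, t.2.1) = p).card ≤ C.indisNum := by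
      intro p hp
      rw [hPdef, Finset.mem_filter] at hp
      have h1 : (T.filter fun t => (t.1, t.2.1) = p).card ≤
          (Finset.univ.filter fun β : Ω => ∀ s ∈ C.S, ((β, p.1) ∈ s ↔ (β, p.2) ∈ s)).card := by
        apply Finset.card_le_card_of_injOn (fun t => t.2.2)
        · intro t ht
          rw [Finset.mem_coe, Finset.mem_filter] at ht
          obtain ⟨hT, hpeq⟩ := ht
          rw [hTdef, Finset.mem_filter] at hT
          simp only [Finset.mem_coe, mem_filter, mem_univ, true_and]
          have h1 : t.1 = p.1 := congrArg Prod.fst hpeq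
          have h2 : t.2.1 = p.2 := congrArg Prod.snd hpeq
          rw [← h1, ← h2]
          exact hT.2.2
        · rintro t ht t' ht' heq
          simp only [Finset.coe_filter, Set.mem_setOf_eq] at ht ht'
          have a1 := congrArg Prod.fst ht.2
          have a2 := congrArg Prod.snd ht.2
          have b1 := congrArg Prod.fst ht'.2
          have b2 := congrArg Prod.snd ht'.2
          exact Prod.ext (a1.trans b1.symm) (Prod.ext (a2.trans b2.symm) heq)
      have h2 : (Finset.univ.filter fun β : Ω =>
          ∀ s ∈ C.S, ((β, p.1) ∈ s ↔ (β, p.2) ∈ s)).card = (C.indisSet p.1 p.2).ncard := by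
        rw [indisSet, ncard_setOf]
      calc (T.filter fun t => (t.1, t.2.1) = p).card ≤ _ := h1
        _ = (C.indisSet p.1 p.2).ncard := h2
        _ ≤ C.indisNum := indis_le C hp.2
    calc ∑ p ∈ P, (T.filter fun t => (t.1, t.2.1) = p).card
        ≤ ∑ _p ∈ P, C.indisNum := Finset.sum_le_sum hfib
      _ = P.card * C.indisNum := by rw [Finset.sum_const, smul_eq_mul]
      _ ≤ (M.card * (M.card - 1)) * C.indisNum := by
          apply Nat.mul_le_mul_right
          have hsub : P ⊆ M.biUnion (fun δ => (M.erase δ).image (Prod.mk δ)) := by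
            intro p hp
            rw [hPdef, Finset.mem_filter, Finset.mem_product] at hp
            rw [Finset.mem_biUnion]
            exact ⟨p.1, hp.1.1, Finset.mem_image.mpr
              ⟨p.2, Finset.mem_erase.mpr ⟨fun h => hp.2 h.symm, hp.1.2⟩, rfl⟩⟩
          calc P.card ≤ (M.biUnion (fun δ => (M.erase δ).image (Prod.mk δ))).card :=
                Finset.card_le_card hsub
            _ ≤ ∑ δ ∈ M, ((M.erase δ).image (Prod.mk δ)).card := Finset.card_biUnion_le
            _ ≤ ∑ δ ∈ M, (M.card - 1) := by
                apply Finset.sum_le_sum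
                intro δ hδ
                calc ((M.erase δ).image (Prod.mk δ)).card ≤ (M.erase δ).card :=
                      Finset.card_image_le
                  _ = M.card - 1 := Finset.card_erase_of_mem hδ
            _ = M.card * (M.card - 1) := by rw [Finset.sum_const, smul_eq_mul]
      _ = C.indisNum * (M.card * (M.card - 1)) := Nat.mul_comm _ _
  -- Step C : M.card ≤ maxValency
  have hMval : M.card = valency x := (valency_eq C hxS hμα).symm
  have hMk : M.card ≤ C.maxValency := hMval ▸ valency_le_max C hxS
  calc 2 * L.card ≤ T.card := stepA
    _ ≤ C.indisNum * (M.card * (M.card - 1)) := stepB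
    _ ≤ C.indisNum * (C.maxValency * (C.maxValency - 1)) := by
        apply Nat.mul_le_mul_left
        exact Nat.mul_le_mul hMk (Nat.sub_le_sub_right hMk 1)
    _ = C.indisNum * C.maxValency * (C.maxValency - 1) := (Nat.mul_assoc _ _ _).symm
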